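/- Let V be a unital multiplicative partial isometry on a finite dimensional Hilbert space H, with two-sided unit elements 𝟙 = λ(ε̂) ∈ A and 𝟙̂ = ρ(ε) ∈ Â for the right and left legs. Then Δ(𝟙) = VV* and Δ̂(𝟙̂) = V*V, where Δ(X) = V(X⊗1)V* and Δ̂(X) = V*(1⊗X)V. -/

import Mathlib

open Matrix

namespace MPIpaper

variable {n : Type*} [Fintype n] [DecidableEq n]

noncomputable section

/-- `W₁₂ = W ⊗ 1` on `H ⊗ H ⊗ H`. -/
def leg12 (V : Matrix (n × n) (n × n) ℂ) : Matrix (n × n × n) (n × n × n) ℂ :=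
  Matrix.of fun p q => V (p.1, p.2.1) (q.1, q.2.1) * (if p.2.2 = q.2.2 then (1 : ℂ) else 0)

/-- `W₂₃ = 1 ⊗ W` on `H ⊗ H ⊗ H`. -/
def leg23 (V : Matrix (n × n) (n × n) ℂ) : Matrix (n × n × n) (n × n × n) ℂ :=
  Matrix.of fun p q => (if p.1 = q.1 then (1 : ℂ) else 0) * V p.2 q.2

/-- `W₁₃ = (1⊗Σ)(W⊗1)(1⊗Σ)` on `H ⊗ H ⊗ H`. -/
def leg13 (V : Matrix (n × n) (n × n) ℂ) : Matrix (n × n × n) (n × n × n) ℂ :=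
  Matrix.of fun p q => V (p.1, p.2.2) (q.1, q.2.2) * (if p.2.1 = q.2.1 then (1 : ℂ) else 0)

/-- A multiplicative partial isometry: `VV*V = V`, the pentagon equation, and the
three auxiliary (hexagon-type) equations. -/
def IsMPI (V : Matrix (n × n) (n × n) ℂ) : Prop :=
  V * Vᴴ * V = V ∧
  leg23 V * leg12 V = leg12 V * leg13 V * leg23 V ∧
  leg13 V * leg23 V * (leg23 V)ᴴ = (leg12 V)ᴴ * leg12 V * leg13 V ∧
  leg12 V * (leg12 V)ᴴ * leg23 V = leg23 V * leg12 V * (leg12 V)ᴴ ∧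
  leg12 V * (leg23 V)ᴴ * leg23 V = (leg23 V)ᴴ * leg23 V * leg12 V

/-- `λ(ω) = (ω ⊗ id)(V)`. -/
def lam (ω : Matrix n n ℂ →ₗ[ℂ] ℂ) (V : Matrix (n × n) (n × n) ℂ) : Matrix n n ℂ :=
  Matrix.of fun i j => ω (Matrix.of fun a b => V (a, i) (b, j))

/-- `ρ(ω) = (id ⊗ ω)(V)`. -/
def rho (ω : Matrix n n ℂ →ₗ[ℂ] ℂ) (V : Matrix (n × n) (n × n) ℂ) : Matrix n n ℂ :=
  Matrix.of fun i j => ω (Matrix.of fun a b => V (i, a) (j, b))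

/-- `1 ⊗ X` on `H ⊗ H`. -/
def oneTensor (X : Matrix n n ℂ) : Matrix (n × n) (n × n) ℂ :=
  Matrix.of fun p q => (if p.1 = q.1 then (1 : ℂ) else 0) * X p.2 q.2

/-- `X ⊗ 1` on `H ⊗ H`. -/
def tensorOne (X : Matrix n n ℂ) : Matrix (n × n) (n × n) ℂ :=
  Matrix.of fun p q => X p.1 q.1 * (if p.2 = q.2 then (1 : ℂ) else 0)

/-- `Δ(X) = V (X ⊗ 1) V*`. -/
def Delta (V : Matrix (n × n) (n × n) ℂ) (X : Matrix n n ℂ) : Matrix (n × n) (n × n) ℂ :=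
  V * tensorOne X * Vᴴ

/-- `Δ̂(X) = V* (1 ⊗ X) V`. -/
def hatDelta (V : Matrix (n × n) (n × n) ℂ) (X : Matrix n n ℂ) : Matrix (n × n) (n × n) ℂ :=
  Vᴴ * oneTensor X * V

/-- `(ω ⊗ ω')(W)` for an operator `W` on `H ⊗ H`. -/
def applyBoth (ω ω' : Matrix n n ℂ →ₗ[ℂ] ℂ) (W : Matrix (n × n) (n × n) ℂ) : ℂ :=
  ω (Matrix.of fun i j => ω' (Matrix.of fun k l => W (i, k) (j, l)))

end

/-! ### generic sum helpers -/

lemma sum3_rev {α β γ : Type*} [Fintype α] [Fintype β] [Fintype γ]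
    (f : α → β → γ → ℂ) :
    ∑ a, ∑ b, ∑ c, f a b c = ∑ c, ∑ b, ∑ a, f a b c := by
  calc ∑ a, ∑ b, ∑ c, f a b c
      = ∑ b, ∑ a, ∑ c, f a b c := Finset.sum_comm
    _ = ∑ b, ∑ c, ∑ a, f a b c := Finset.sum_congr rfl fun b _ => Finset.sum_comm
    _ = ∑ c, ∑ b, ∑ a, f a b c := Finset.sum_comm

lemma sum3_last_front {α β γ : Type*} [Fintype α] [Fintype β] [Fintype γ]
    (f : α → β → γ → ℂ) :
    ∑ a, ∑ b, ∑ c, f a b c = ∑ c, ∑ a, ∑ b, f a b c := by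
  calc ∑ a, ∑ b, ∑ c, f a b c
      = ∑ a, ∑ c, ∑ b, f a b c := Finset.sum_congr rfl fun a _ => Finset.sum_comm
    _ = ∑ c, ∑ a, ∑ b, f a b c := Finset.sum_comm

lemma sum3_first_last {α β γ : Type*} [Fintype α] [Fintype β] [Fintype γ]
    (f : α → β → γ → ℂ) :
    ∑ a, ∑ b, ∑ c, f a b c = ∑ b, ∑ c, ∑ a, f a b c := by
  calc ∑ a, ∑ b, ∑ c, f a b c
      = ∑ b, ∑ a, ∑ c, f a b c := Finset.sum_comm
    _ = ∑ b, ∑ c, ∑ a, f a b c := Finset.sum_congr rfl fun b _ => Finset.sum_comm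

lemma sum4_last_front {α β γ δ : Type*} [Fintype α] [Fintype β] [Fintype γ] [Fintype δ]
    (f : α → β → γ → δ → ℂ) :
    ∑ a, ∑ b, ∑ c, ∑ d, f a b c d = ∑ d, ∑ a, ∑ b, ∑ c, f a b c d := by
  calc ∑ a, ∑ b, ∑ c, ∑ d, f a b c d
      = ∑ a, ∑ b, ∑ d, ∑ c, f a b c d :=
        Finset.sum_congr rfl fun a _ => Finset.sum_congr rfl fun b _ => Finset.sum_comm
    _ = ∑ a, ∑ d, ∑ b, ∑ c, f a b c d :=
        Finset.sum_congr rfl fun a _ => Finset.sum_comm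
    _ = ∑ d, ∑ a, ∑ b, ∑ c, f a b c d := Finset.sum_comm

/-! ### representation of linear functionals -/

lemma stdE_smul (a b : n) (c : ℂ) :
    Matrix.single a b c = c • Matrix.single a b (1 : ℂ) := by
  ext i j
  simp [Matrix.single, Matrix.smul_apply, mul_ite]

lemma rep (ω : Matrix n n ℂ →ₗ[ℂ] ℂ) (X : Matrix n n ℂ) :
    ω X = ∑ p : n × n, X p.1 p.2 * ω (Matrix.single p.1 p.2 1) := by
  have h : X = ∑ p : n × n, X p.1 p.2 • Matrix.single p.1 p.2 (1 : ℂ) := by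
    rw [Fintype.sum_prod_type]
    conv_lhs => rw [matrix_eq_sum_single X]
    refine Finset.sum_congr rfl fun i _ => Finset.sum_congr rfl fun j _ => ?_
    exact stdE_smul i j _
  conv_lhs => rw [h]
  rw [map_sum]
  refine Finset.sum_congr rfl fun p _ => ?_
  rw [LinearMap.map_smul, smul_eq_mul]

lemma lam_eq_sum (ω : Matrix n n ℂ →ₗ[ℂ] ℂ) (W : Matrix (n × n) (n × n) ℂ) (i j : n) :
    lam ω W i j = ∑ p : n × n, W (p.1, i) (p.2, j) * ω (Matrix.single p.1 p.2 1) := by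
  simp only [lam, Matrix.of_apply]
  rw [rep]
  simp

lemma rho_eq_sum (ω : Matrix n n ℂ →ₗ[ℂ] ℂ) (W : Matrix (n × n) (n × n) ℂ) (i j : n) :
    rho ω W i j = ∑ p : n × n, W (i, p.1) (j, p.2) * ω (Matrix.single p.1 p.2 1) := by
  simp only [rho, Matrix.of_apply]
  rw [rep]
  simp

/-! ### leg homomorphism lemmas -/

lemma leg12_mul (A B : Matrix (n × n) (n × n) ℂ) :
    leg12 (A * B) = leg12 A * leg12 B := by
  ext ⟨a, i, k⟩ ⟨b, j, l⟩
  simp [leg12, Matrix.mul_apply, Fintype.sum_prod_type, mul_ite, ite_mul,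
    Finset.sum_mul, Finset.mul_sum]

lemma leg23_mul (A B : Matrix (n × n) (n × n) ℂ) :
    leg23 (A * B) = leg23 A * leg23 B := by
  ext ⟨a, i, k⟩ ⟨b, j, l⟩
  simp [leg23, Matrix.mul_apply, Fintype.sum_prod_type, mul_ite, ite_mul,
    Finset.sum_mul, Finset.mul_sum]

omit [Fintype n] in
lemma leg12_conjTranspose (A : Matrix (n × n) (n × n) ℂ) :
    leg12 (Aᴴ) = (leg12 A)ᴴ := by
  ext ⟨a, i, k⟩ ⟨b, j, l⟩
  simp [leg12, conjTranspose_apply, apply_ite (star : ℂ → ℂ), eq_comm]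

omit [Fintype n] in
lemma leg23_conjTranspose (A : Matrix (n × n) (n × n) ℂ) :
    leg23 (Aᴴ) = (leg23 A)ᴴ := by
  ext ⟨a, i, k⟩ ⟨b, j, l⟩
  simp [leg23, conjTranspose_apply, apply_ite (star : ℂ → ℂ), eq_comm]

/-! ### entry expansion lemmas -/

lemma entry_12_23_12 (A B C : Matrix (n × n) (n × n) ℂ) (a i k b j l : n) :
    (leg12 A * leg23 B * leg12 C) (a, i, k) (b, j, l)
      = ∑ e, ∑ m, ∑ r, A (a, i) (e, m) * B (m, k) (r, l) * C (e, r) (b, j) := by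
  simp only [Matrix.mul_apply, leg12, leg23, Matrix.of_apply, Fintype.sum_prod_type,
    mul_ite, ite_mul, mul_zero, zero_mul, mul_one, one_mul,
    Finset.sum_ite_eq, Finset.sum_ite_eq', Finset.mem_univ, if_true,
    Finset.sum_mul, Finset.mul_sum, Finset.sum_ite_irrel, Finset.sum_const_zero]
  exact Finset.sum_congr rfl fun e _ => Finset.sum_comm

lemma entry_23_12_23 (A B C : Matrix (n × n) (n × n) ℂ) (a i k b j l : n) :
    (leg23 A * leg12 B * leg23 C) (a, i, k) (b, j, l)
      = ∑ m, ∑ nn, ∑ r, A (i, k) (m, nn) * B (a, m) (b, r) * C (r, nn) (j, l) := by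
  simp only [Matrix.mul_apply, leg12, leg23, Matrix.of_apply, Fintype.sum_prod_type,
    mul_ite, ite_mul, mul_zero, zero_mul, mul_one, one_mul,
    Finset.sum_ite_eq, Finset.sum_ite_eq', Finset.mem_univ, if_true,
    Finset.sum_mul, Finset.mul_sum, Finset.sum_ite_irrel, Finset.sum_const_zero]
  exact sum3_rev _

lemma entry_13_23 (A B : Matrix (n × n) (n × n) ℂ) (a i k b j l : n) :
    (leg13 A * leg23 B) (a, i, k) (b, j, l)
      = ∑ m, A (a, k) (b, m) * B (i, m) (j, l) := by
  simp only [Matrix.mul_apply, leg13, leg23, Matrix.of_apply, Fintype.sum_prod_type,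
    mul_ite, ite_mul, mul_zero, zero_mul, mul_one, one_mul,
    Finset.sum_ite_eq, Finset.sum_ite_eq', Finset.mem_univ, if_true,
    Finset.sum_mul, Finset.mul_sum, Finset.sum_ite_irrel, Finset.sum_const_zero]

lemma entry_12_13 (A B : Matrix (n × n) (n × n) ℂ) (a i k b j l : n) :
    (leg12 A * leg13 B) (a, i, k) (b, j, l)
      = ∑ e, A (a, i) (e, j) * B (e, k) (b, l) := by
  simp only [Matrix.mul_apply, leg12, leg13, Matrix.of_apply, Fintype.sum_prod_type,
    mul_ite, ite_mul, mul_zero, zero_mul, mul_one, one_mul,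
    Finset.sum_ite_eq, Finset.sum_ite_eq', Finset.mem_univ, if_true,
    Finset.sum_mul, Finset.mul_sum, Finset.sum_ite_irrel, Finset.sum_const_zero]

lemma entry_mid_oneTensor (A : Matrix (n × n) (n × n) ℂ) (X : Matrix n n ℂ)
    (B : Matrix (n × n) (n × n) ℂ) (a i b j : n) :
    (A * oneTensor X * B) (a, i) (b, j)
      = ∑ e, ∑ m, ∑ r, A (a, i) (e, m) * X m r * B (e, r) (b, j) := by
  simp only [Matrix.mul_apply, oneTensor, Matrix.of_apply, Fintype.sum_prod_type,
    mul_ite, ite_mul, mul_zero, zero_mul, mul_one, one_mul,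
    Finset.sum_ite_eq, Finset.sum_ite_eq', Finset.mem_univ, if_true,
    Finset.sum_mul, Finset.mul_sum, Finset.sum_ite_irrel, Finset.sum_const_zero]
  exact Finset.sum_congr rfl fun e _ => Finset.sum_comm

lemma entry_mid_tensorOne (A : Matrix (n × n) (n × n) ℂ) (X : Matrix n n ℂ)
    (B : Matrix (n × n) (n × n) ℂ) (i k j l : n) :
    (A * tensorOne X * B) (i, k) (j, l)
      = ∑ m, ∑ nn, ∑ r, A (i, k) (m, nn) * X m r * B (r, nn) (j, l) := by
  simp only [Matrix.mul_apply, tensorOne, Matrix.of_apply, Fintype.sum_prod_type,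
    mul_ite, ite_mul, mul_zero, zero_mul, mul_one, one_mul,
    Finset.sum_ite_eq, Finset.sum_ite_eq', Finset.mem_univ, if_true,
    Finset.sum_mul, Finset.mul_sum, Finset.sum_ite_irrel, Finset.sum_const_zero]
  exact sum3_rev _

lemma entry_oneTensor_mul (X : Matrix n n ℂ) (B : Matrix (n × n) (n × n) ℂ) (i k j l : n) :
    (oneTensor X * B) (i, k) (j, l) = ∑ m, X k m * B (i, m) (j, l) := by
  simp only [Matrix.mul_apply, oneTensor, Matrix.of_apply, Fintype.sum_prod_type,
    mul_ite, ite_mul, mul_zero, zero_mul, mul_one, one_mul,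
    Finset.sum_ite_eq, Finset.sum_ite_eq', Finset.mem_univ, if_true,
    Finset.sum_mul, Finset.mul_sum, Finset.sum_ite_irrel, Finset.sum_const_zero]

lemma entry_mul_oneTensor (A : Matrix (n × n) (n × n) ℂ) (X : Matrix n n ℂ) (i k j l : n) :
    (A * oneTensor X) (i, k) (j, l) = ∑ m, A (i, k) (j, m) * X m l := by
  simp only [Matrix.mul_apply, oneTensor, Matrix.of_apply, Fintype.sum_prod_type,
    mul_ite, ite_mul, mul_zero, zero_mul, mul_one, one_mul,
    Finset.sum_ite_eq, Finset.sum_ite_eq', Finset.mem_univ, if_true,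
    Finset.sum_mul, Finset.mul_sum, Finset.sum_ite_irrel, Finset.sum_const_zero]

lemma entry_tensorOne_mul (X : Matrix n n ℂ) (B : Matrix (n × n) (n × n) ℂ) (i k j l : n) :
    (tensorOne X * B) (i, k) (j, l) = ∑ m, X i m * B (m, k) (j, l) := by
  simp only [Matrix.mul_apply, tensorOne, Matrix.of_apply, Fintype.sum_prod_type,
    mul_ite, ite_mul, mul_zero, zero_mul, mul_one, one_mul,
    Finset.sum_ite_eq, Finset.sum_ite_eq', Finset.mem_univ, if_true,
    Finset.sum_mul, Finset.mul_sum, Finset.sum_ite_irrel, Finset.sum_const_zero]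

lemma entry_mul_tensorOne (A : Matrix (n × n) (n × n) ℂ) (X : Matrix n n ℂ) (a i b j : n) :
    (A * tensorOne X) (a, i) (b, j) = ∑ e, A (a, i) (e, j) * X e b := by
  simp only [Matrix.mul_apply, tensorOne, Matrix.of_apply, Fintype.sum_prod_type,
    mul_ite, ite_mul, mul_zero, zero_mul, mul_one, one_mul,
    Finset.sum_ite_eq, Finset.sum_ite_eq', Finset.mem_univ, if_true,
    Finset.sum_mul, Finset.mul_sum, Finset.sum_ite_irrel, Finset.sum_const_zero]



/-- the entry functional `X ↦ X a b` -/
def eLF (a b : n) : Matrix n n ℂ →ₗ[ℂ] ℂ where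
  toFun X := X a b
  map_add' _ _ := rfl
  map_smul' _ _ := rfl

lemma lam_mul_right (ω : Matrix n n ℂ →ₗ[ℂ] ℂ) (W : Matrix (n × n) (n × n) ℂ)
    (Y : Matrix n n ℂ) : lam ω W * Y = lam ω (W * oneTensor Y) := by
  ext i j
  rw [Matrix.mul_apply, lam_eq_sum]
  simp only [lam_eq_sum, entry_mul_oneTensor, Finset.sum_mul]
  rw [Finset.sum_comm]
  exact Finset.sum_congr rfl fun p _ => Finset.sum_congr rfl fun k _ => by ring

lemma mul_rho_left (ω : Matrix n n ℂ →ₗ[ℂ] ℂ) (W : Matrix (n × n) (n × n) ℂ)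
    (X : Matrix n n ℂ) : X * rho ω W = rho ω (tensorOne X * W) := by
  ext i j
  rw [Matrix.mul_apply]
  simp only [rho_eq_sum, entry_tensorOne_mul, Finset.sum_mul, Finset.mul_sum]
  rw [Finset.sum_comm]
  exact Finset.sum_congr rfl fun p _ => Finset.sum_congr rfl fun k _ => by ring

lemma contractA (V : Matrix (n × n) (n × n) ℂ) (ω ω' : Matrix n n ℂ →ₗ[ℂ] ℂ)
    (hstar2 : leg12 (Vᴴ) * leg23 V * leg12 V = leg13 V * leg23 V)
    (hS1 : oneTensor (lam ω' V) * V = V) :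
    lam ω' (Vᴴ * oneTensor (rho ω V) * V) = rho ω V := by
  ext i j
  have key : ∀ a b : n, (Vᴴ * oneTensor (rho ω V) * V) (a, i) (b, j)
      = ∑ q : n × n, (leg12 (Vᴴ) * leg23 V * leg12 V) (a, i, q.1) (b, j, q.2)
          * ω (Matrix.single q.1 q.2 1) := by
    intro a b
    rw [entry_mid_oneTensor]
    simp only [rho_eq_sum, entry_12_23_12, Finset.sum_mul, Finset.mul_sum]
    rw [sum4_last_front]
    exact Finset.sum_congr rfl fun q _ => Finset.sum_congr rfl fun e _ =>
      Finset.sum_congr rfl fun m _ => Finset.sum_congr rfl fun r _ => by ring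
  rw [lam_eq_sum]
  simp only [key, hstar2]
  -- RHS side set-up
  have hC : ∀ k l : n, V (i, k) (j, l) = ∑ m, (lam ω' V) k m * V (i, m) (j, l) := by
    intro k l
    rw [← entry_oneTensor_mul]
    exact (congrFun (congrFun hS1 (i, k)) (j, l)).symm
  simp only [entry_13_23, Finset.sum_mul]
  rw [rho_eq_sum]
  conv_lhs => rw [sum3_first_last]
  refine Finset.sum_congr rfl fun q _ => ?_
  rw [hC q.1 q.2]
  simp only [lam_eq_sum, Finset.sum_mul]
  exact Finset.sum_congr rfl fun m _ => Finset.sum_congr rfl fun p _ => by ring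

lemma contractB (V : Matrix (n × n) (n × n) ℂ) (ω ω' : Matrix n n ℂ →ₗ[ℂ] ℂ)
    (hstar1 : leg23 V * leg12 V * leg23 (Vᴴ) = leg12 V * leg13 V)
    (hT2 : V * tensorOne (rho ω V) = V) :
    rho ω (V * tensorOne (lam ω' V) * Vᴴ) = lam ω' V := by
  ext i j
  have key : ∀ k l : n, (V * tensorOne (lam ω' V) * Vᴴ) (i, k) (j, l)
      = ∑ p : n × n, (leg23 V * leg12 V * leg23 (Vᴴ)) (p.1, i, k) (p.2, j, l)
          * ω' (Matrix.single p.1 p.2 1) := by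
    intro k l
    rw [entry_mid_tensorOne]
    simp only [lam_eq_sum, entry_23_12_23, Finset.sum_mul, Finset.mul_sum]
    rw [sum4_last_front]
    exact Finset.sum_congr rfl fun p _ => Finset.sum_congr rfl fun m _ =>
      Finset.sum_congr rfl fun nn _ => Finset.sum_congr rfl fun r _ => by ring
  rw [rho_eq_sum]
  simp only [key, hstar1]
  have hC : ∀ a b : n, V (a, i) (b, j) = ∑ e, V (a, i) (e, j) * (rho ω V) e b := by
    intro a b
    rw [← entry_mul_tensorOne]
    exact (congrFun (congrFun hT2 (a, i)) (b, j)).symm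
  simp only [entry_12_13, Finset.sum_mul]
  rw [lam_eq_sum]
  conv_lhs => rw [sum3_first_last]
  refine Finset.sum_congr rfl fun p _ => ?_
  rw [hC p.1 p.2]
  simp only [rho_eq_sum, Finset.mul_sum, Finset.sum_mul]
  exact Finset.sum_congr rfl fun e _ => Finset.sum_congr rfl fun q _ => by ring

theorem statement12 (V : Matrix (n × n) (n × n) ℂ) (hV : IsMPI V)
    (ε εhat : Matrix n n ℂ →ₗ[ℂ] ℂ)
    (hεhat : ∀ ω : Matrix n n ℂ →ₗ[ℂ] ℂ,
      lam εhat V * lam ω V = lam ω V ∧ lam ω V * lam εhat V = lam ω V)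
    (hε : ∀ ω : Matrix n n ℂ →ₗ[ℂ] ℂ,
      rho ε V * rho ω V = rho ω V ∧ rho ω V * rho ε V = rho ω V) :
    Delta V (lam εhat V) = V * Vᴴ ∧ hatDelta V (rho ε V) = Vᴴ * V := by
  obtain ⟨hPI, hPent, hHex1, -, -⟩ := hV
  -- the unit relations coming from `λ(ε̂)` and `ρ(ε)` being units
  have hS1 : oneTensor (lam εhat V) * V = V := by
    ext ⟨i, k⟩ ⟨j, l⟩
    rw [entry_oneTensor_mul]
    have h := congrFun (congrFun (hεhat (eLF i j)).1 k) l
    rw [Matrix.mul_apply] at h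
    exact h
  have hS2 : V * oneTensor (lam εhat V) = V := by
    ext ⟨i, k⟩ ⟨j, l⟩
    rw [entry_mul_oneTensor]
    have h := congrFun (congrFun (hεhat (eLF i j)).2 k) l
    rw [Matrix.mul_apply] at h
    exact h
  have hT1 : tensorOne (rho ε V) * V = V := by
    ext ⟨i, k⟩ ⟨j, l⟩
    rw [entry_tensorOne_mul]
    have h := congrFun (congrFun (hε (eLF k l)).1 i) j
    rw [Matrix.mul_apply] at h
    exact h
  have hT2 : V * tensorOne (rho ε V) = V := by
    ext ⟨i, k⟩ ⟨j, l⟩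
    rw [entry_mul_tensorOne]
    have h := congrFun (congrFun (hε (eLF k l)).2 i) j
    rw [Matrix.mul_apply] at h
    exact h
  -- lifted partial isometry identities
  have PI12 : leg12 V * (leg12 V)ᴴ * leg12 V = leg12 V := by
    rw [← leg12_conjTranspose, ← leg12_mul, ← leg12_mul, hPI]
  have PI23 : leg23 V * (leg23 V)ᴴ * leg23 V = leg23 V := by
    rw [← leg23_conjTranspose, ← leg23_mul, ← leg23_mul, hPI]
  -- the two key triple-space identities
  have hstar1 : leg23 V * leg12 V * leg23 (Vᴴ) = leg12 V * leg13 V := by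
    rw [leg23_conjTranspose, hPent]
    calc leg12 V * leg13 V * leg23 V * (leg23 V)ᴴ
        = leg12 V * (leg13 V * leg23 V * (leg23 V)ᴴ) := by simp only [mul_assoc]
      _ = leg12 V * ((leg12 V)ᴴ * leg12 V * leg13 V) := by rw [hHex1]
      _ = leg12 V * (leg12 V)ᴴ * leg12 V * leg13 V := by simp only [mul_assoc]
      _ = leg12 V * leg13 V := by rw [PI12]
  have hstar2 : leg12 (Vᴴ) * leg23 V * leg12 V = leg13 V * leg23 V := by
    rw [leg12_conjTranspose]
    calc (leg12 V)ᴴ * leg23 V * leg12 V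
        = (leg12 V)ᴴ * (leg23 V * leg12 V) := by rw [mul_assoc]
      _ = (leg12 V)ᴴ * (leg12 V * leg13 V * leg23 V) := by rw [hPent]
      _ = (leg12 V)ᴴ * leg12 V * leg13 V * leg23 V := by simp only [mul_assoc]
      _ = leg13 V * leg23 V * (leg23 V)ᴴ * leg23 V := by rw [← hHex1]
      _ = leg13 V * (leg23 V * (leg23 V)ᴴ * leg23 V) := by simp only [mul_assoc]
      _ = leg13 V * leg23 V := by rw [PI23]
  -- the two slice identities
  have I1 : lam εhat (Vᴴ * oneTensor (rho ε V) * V) = rho ε V := contractA V ε εhat hstar2 hS1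
  have I2 : rho ε (V * tensorOne (lam εhat V) * Vᴴ) = lam εhat V := contractB V ε εhat hstar1 hT2
  -- ρ(ε)·λ(ε̂) = ρ(ε)
  have E1 : rho ε V * lam εhat V = rho ε V := by
    conv_lhs => rw [← I1]
    rw [lam_mul_right, mul_assoc (Vᴴ * oneTensor (rho ε V)) V, hS2, I1]
  -- ρ(ε)·λ(ε̂) = λ(ε̂)
  have E2 : rho ε V * lam εhat V = lam εhat V := by
    conv_lhs => rw [show lam εhat V = rho ε (V * tensorOne (lam εhat V) * Vᴴ) from I2.symm]
    rw [mul_rho_left]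
    rw [show tensorOne (rho ε V) * (V * tensorOne (lam εhat V) * Vᴴ)
        = tensorOne (rho ε V) * V * tensorOne (lam εhat V) * Vᴴ from by
      simp only [mul_assoc]]
    rw [hT1, I2]
  -- the two units coincide
  have hkey : lam εhat V = rho ε V := E2.symm.trans E1
  constructor
  · show V * tensorOne (lam εhat V) * Vᴴ = V * Vᴴ
    rw [hkey, hT2]
  · show Vᴴ * oneTensor (rho ε V) * V = Vᴴ * V
    rw [← hkey, mul_assoc, hS1]


end MPIpaper
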